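/- Let τ_w be the waiting time for s successes within a window of w trials and τ_∞ the unconstrained time of the s-th success, for i.i.d. Bernoulli(p) trials with 0 < p < 1 and w < ∞ finite. Let ε = P(τ_w > w). Then (E(τ_w) - E(τ_∞)) / E(τ_w) < ε. -/

import Mathlib

open MeasureTheory ProbabilityTheory ENNReal
open scoped Classical

noncomputable def tauWin {Ω : Type*} (Z : ℕ → Ω → Bool) (w : ℕ∞) (s : ℕ) (ω : Ω) : ℝ≥0∞ :=
  sInf ((fun t : ℕ => (t : ℝ≥0∞)) ''
    {t | s ≤ ((Finset.range t).filter
      (fun i : ℕ => (t : ℕ∞) ≤ (i : ℕ∞) + w ∧ Z i ω = true)).card})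

namespace TauAux

variable {Ω : Type*}

/-- number of successes in the window ending at `t`. -/
noncomputable def cnt (Z : ℕ → Ω → Bool) (W : ℕ∞) (t : ℕ) (ω : Ω) : ℕ :=
  ((Finset.range t).filter
      (fun i : ℕ => (t : ℕ∞) ≤ (i : ℕ∞) + W ∧ Z i ω = true)).card

lemma tauWin_def (Z : ℕ → Ω → Bool) (W : ℕ∞) (s : ℕ) (ω : Ω) :
    tauWin Z W s ω = sInf ((fun t : ℕ => (t : ℝ≥0∞)) '' {t | s ≤ cnt Z W t ω}) := rfl

lemma tauWin_le_iff (Z : ℕ → Ω → Bool) (W : ℕ∞) (s : ℕ) (ω : Ω) (n : ℕ) :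
    tauWin Z W s ω ≤ n ↔ ∃ t ≤ n, s ≤ cnt Z W t ω := by
  constructor
  · intro h
    have h2 : tauWin Z W s ω < (n : ℝ≥0∞) + 1 :=
      h.trans_lt (ENNReal.lt_add_right (by simp) one_ne_zero)
    rw [tauWin_def, sInf_lt_iff] at h2
    obtain ⟨x, hx, hlt⟩ := h2
    obtain ⟨t, ht, rfl⟩ := hx
    refine ⟨t, ?_, ht⟩
    have h3 : (t : ℝ≥0∞) < ((n + 1 : ℕ) : ℝ≥0∞) := by push_cast; exact hlt
    exact Nat.lt_succ_iff.mp (by exact_mod_cast h3)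
  · rintro ⟨t, htn, ht⟩
    calc tauWin Z W s ω ≤ (t : ℝ≥0∞) := sInf_le ⟨t, ht, rfl⟩
    _ ≤ (n : ℝ≥0∞) := by exact_mod_cast htn

lemma lt_tauWin_iff (Z : ℕ → Ω → Bool) (W : ℕ∞) (s : ℕ) (ω : Ω) (n : ℕ) :
    (n : ℝ≥0∞) < tauWin Z W s ω ↔ ∀ t ≤ n, ¬ s ≤ cnt Z W t ω := by
  rw [← not_le, tauWin_le_iff]; push_neg; rfl

lemma tauWin_cases (Z : ℕ → Ω → Bool) (W : ℕ∞) (s : ℕ) (ω : Ω) :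
    tauWin Z W s ω = ⊤ ∨ ∃ k : ℕ, tauWin Z W s ω = k ∧ s ≤ cnt Z W k ω := by
  by_cases h : {t : ℕ | s ≤ cnt Z W t ω}.Nonempty
  · right
    refine ⟨sInf {t | s ≤ cnt Z W t ω}, ?_, Nat.sInf_mem h⟩
    rw [tauWin_def]
    apply le_antisymm
    · exact sInf_le ⟨_, Nat.sInf_mem h, rfl⟩
    · apply le_sInf
      rintro x ⟨t, ht, rfl⟩
      show ((sInf {t | s ≤ cnt Z W t ω} : ℕ) : ℝ≥0∞) ≤ (t : ℝ≥0∞)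
      exact_mod_cast Nat.sInf_le ht
  · left
    rw [tauWin_def, Set.not_nonempty_iff_eq_empty.mp h]
    simp

lemma cnt_le_top (Z : ℕ → Ω → Bool) (W : ℕ∞) (t : ℕ) (ω : Ω) :
    cnt Z W t ω ≤ cnt Z ⊤ t ω := by
  apply Finset.card_le_card
  intro i hi
  simp only [Finset.mem_filter] at hi ⊢
  exact ⟨hi.1, by simp, hi.2.2⟩

lemma tauWin_top_le (Z : ℕ → Ω → Bool) (W : ℕ∞) (s : ℕ) (ω : Ω) :
    tauWin Z ⊤ s ω ≤ tauWin Z W s ω := by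
  rw [tauWin_def, tauWin_def]
  apply sInf_le_sInf
  apply Set.image_mono
  intro t ht
  exact le_trans ht (cnt_le_top Z W t ω)

lemma cnt_eq_of_le (Z : ℕ → Ω → Bool) (w t : ℕ) (ω : Ω) (htw : t ≤ w) :
    cnt Z (w : ℕ∞) t ω = cnt Z ⊤ t ω := by
  unfold cnt
  congr 1
  apply Finset.filter_congr
  intro i hi
  have h1 : (t : ℕ∞) ≤ (i : ℕ∞) + (w : ℕ∞) :=
    le_trans (by exact_mod_cast htw) le_add_self
  simp [h1]

lemma natCast_le_tauWin (Z : ℕ → Ω → Bool) (W : ℕ∞) (s : ℕ) (ω : Ω) :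
    (s : ℝ≥0∞) ≤ tauWin Z W s ω := by
  rw [tauWin_def]
  apply le_sInf
  rintro x ⟨t, ht, rfl⟩
  have h2 : s ≤ t := le_trans ht (le_trans (Finset.card_filter_le _ _) (by simp))
  show (s : ℝ≥0∞) ≤ (t : ℝ≥0∞)
  exact_mod_cast h2

lemma tauWin_top_eq (Z : ℕ → Ω → Bool) (w s : ℕ) (ω : Ω)
    (hle : tauWin Z (w : ℕ∞) s ω ≤ (w : ℝ≥0∞)) :
    tauWin Z ⊤ s ω = tauWin Z (w : ℕ∞) s ω := by
  refine le_antisymm (tauWin_top_le Z _ s ω) ?_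
  rcases tauWin_cases Z ⊤ s ω with h | ⟨k, hk, hcnt⟩
  · exfalso
    have h2 : tauWin Z ⊤ s ω < ⊤ :=
      lt_of_le_of_lt (le_trans (tauWin_top_le Z _ s ω) hle) (by simp)
    rw [h] at h2
    exact lt_irrefl _ h2
  · have hkw : k ≤ w := by
      have := le_trans (hk ▸ tauWin_top_le Z (w:ℕ∞) s ω) hle
      exact_mod_cast this
    have : s ≤ cnt Z (w : ℕ∞) k ω := by rw [cnt_eq_of_le Z w k ω hkw]; exact hcnt
    rw [hk]
    exact sInf_le ⟨k, this, rfl⟩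

lemma lt_tauWin_top_iff (Z : ℕ → Ω → Bool) (w s : ℕ) (ω : Ω) :
    (w : ℝ≥0∞) < tauWin Z (w : ℕ∞) s ω ↔ (w : ℝ≥0∞) < tauWin Z ⊤ s ω := by
  rw [lt_tauWin_iff, lt_tauWin_iff]
  constructor <;> intro h t ht <;> have h2 := h t ht
  · rwa [cnt_eq_of_le Z w t ω ht] at h2
  · rwa [cnt_eq_of_le Z w t ω ht]

lemma tauWin_le_shift (Z : ℕ → Ω → Bool) (w s : ℕ) (ω : Ω) :
    tauWin Z (w : ℕ∞) s ω ≤ (w : ℝ≥0∞) + tauWin (fun i ω => Z (w + i) ω) (w : ℕ∞) s ω := by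
  rcases tauWin_cases (fun i ω => Z (w + i) ω) (w : ℕ∞) s ω with h | ⟨k, hk, hcnt⟩
  · rw [h]; simp
  · rw [hk]
    have key : s ≤ cnt Z (w : ℕ∞) (w + k) ω := by
      have hinj : Function.Injective (fun i : ℕ => w + i) := fun a b hab => by
        simpa using hab
      calc s ≤ cnt (fun i ω => Z (w + i) ω) (w : ℕ∞) k ω := hcnt
      _ = (((Finset.range k).filter
            (fun i : ℕ => (k : ℕ∞) ≤ (i : ℕ∞) + (w:ℕ∞) ∧ Z (w+i) ω = true)).image
            (fun i => w + i)).card := (Finset.card_image_of_injective _ hinj).symm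
      _ ≤ cnt Z (w : ℕ∞) (w + k) ω := by
          apply Finset.card_le_card
          intro j hj
          rw [Finset.mem_image] at hj
          obtain ⟨i, hi, rfl⟩ := hj
          simp only [Finset.mem_filter, Finset.mem_range] at hi ⊢
          refine ⟨by omega, ?_, hi.2.2⟩
          have this : (w:ℕ∞) + (k:ℕ∞) ≤ (w:ℕ∞) + ((i:ℕ∞) + (w:ℕ∞)) := add_le_add_right hi.2.1 (w : ℕ∞)
          calc ((w + k : ℕ) : ℕ∞) = (w : ℕ∞) + (k : ℕ∞) := by push_cast; rfl
          _ ≤ (w : ℕ∞) + ((i : ℕ∞) + (w : ℕ∞)) := this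
          _ = ((w + i : ℕ) : ℕ∞) + (w : ℕ∞) := by push_cast; ring
    calc tauWin Z (w : ℕ∞) s ω ≤ ((w + k : ℕ) : ℝ≥0∞) := sInf_le ⟨w + k, key, rfl⟩
    _ = (w : ℝ≥0∞) + (k : ℝ≥0∞) := by push_cast; rfl



section Meas

lemma measurable_cnt {m : MeasurableSpace Ω} (Z : ℕ → Ω → Bool) (W : ℕ∞) (t : ℕ)
    (hZ : ∀ i, i < t → MeasurableSet[m] {ω | Z i ω = true}) :
    Measurable[m] (cnt Z W t) := by
  have h1 : cnt Z W t = fun ω => ∑ i ∈ Finset.range t,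
      if ((t : ℕ∞) ≤ (i : ℕ∞) + W ∧ Z i ω = true) then 1 else 0 := by
    funext ω; rw [cnt, Finset.card_filter]
  rw [h1]
  apply Finset.measurable_sum
  intro i hi
  have h2 : (fun ω => if ((t : ℕ∞) ≤ (i : ℕ∞) + W ∧ Z i ω = true) then (1:ℕ) else 0)
      = fun ω => if (t : ℕ∞) ≤ (i : ℕ∞) + W then (if Z i ω = true then 1 else 0) else 0 := by
    funext ω; by_cases h : (t : ℕ∞) ≤ (i : ℕ∞) + W <;> simp [h]
  rw [h2]
  by_cases h : (t : ℕ∞) ≤ (i : ℕ∞) + W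
  · simp only [if_pos h]
    exact Measurable.ite (hZ i (Finset.mem_range.mp hi)) measurable_const measurable_const
  · simp only [if_neg h]
    exact measurable_const

lemma measurableSet_le_cnt {m : MeasurableSpace Ω} (Z : ℕ → Ω → Bool) (W : ℕ∞) (s t : ℕ)
    (hZ : ∀ i, i < t → MeasurableSet[m] {ω | Z i ω = true}) :
    MeasurableSet[m] {ω | s ≤ cnt Z W t ω} :=
  measurable_cnt Z W t hZ (MeasurableSet.of_discrete (s := Set.Ici s))

lemma measurable_tauWin {m : MeasurableSpace Ω} (Z : ℕ → Ω → Bool) (W : ℕ∞) (s : ℕ)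
    (hZ : ∀ i, MeasurableSet[m] {ω | Z i ω = true}) :
    Measurable[m] (tauWin Z W s) := by
  have h1 : tauWin Z W s = fun ω => ⨅ (t : ℕ), ⨅ (_ : s ≤ cnt Z W t ω), (t : ℝ≥0∞) := by
    funext ω
    rw [tauWin_def, sInf_image]
    rfl
  rw [h1]
  apply Measurable.iInf
  intro t
  have h2 : (fun ω => ⨅ (_ : s ≤ cnt Z W t ω), (t : ℝ≥0∞))
      = fun ω => if s ≤ cnt Z W t ω then (t : ℝ≥0∞) else ⊤ := by
    funext ω; by_cases h : s ≤ cnt Z W t ω <;> simp [h]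
  rw [h2]
  exact Measurable.ite (measurableSet_le_cnt Z W s t (fun i _ => hZ i))
    measurable_const measurable_const

lemma measurableSet_lt_tauWin {m : MeasurableSpace Ω} (Z : ℕ → Ω → Bool) (W : ℕ∞) (s n : ℕ)
    (hZ : ∀ i, i < n → MeasurableSet[m] {ω | Z i ω = true}) :
    MeasurableSet[m] {ω | (n : ℝ≥0∞) < tauWin Z W s ω} := by
  have h1 : {ω | (n : ℝ≥0∞) < tauWin Z W s ω}
      = ⋂ t ∈ Finset.range (n + 1), {ω | s ≤ cnt Z W t ω}ᶜ := by
    ext ω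
    rw [Set.mem_setOf_eq, lt_tauWin_iff]
    constructor
    · intro h
      simp only [Set.mem_iInter, Set.mem_compl_iff, Set.mem_setOf_eq, Finset.mem_range]
      intro t ht
      exact h t (Nat.lt_succ_iff.mp ht)
    · intro h t ht
      have h2 := Set.mem_iInter.mp h t
      have h3 := Set.mem_iInter.mp h2 (Finset.mem_range.mpr (Nat.lt_succ_iff.mpr ht))
      exact h3
  rw [h1]
  exact MeasurableSet.biInter (Set.to_countable _) (fun t ht =>
    (measurableSet_le_cnt Z W s t (fun i hit => hZ i (lt_of_lt_of_le hit
      (Nat.lt_succ_iff.mp (Finset.mem_range.mp (by exact_mod_cast ht)))))).compl)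

lemma lintegral_eq_tsum {m : MeasurableSpace Ω} (ν : Measure Ω) (f : Ω → ℝ≥0∞)
    (hf : Measurable f) (hval : ∀ ω, f ω = ⊤ ∨ ∃ k : ℕ, f ω = k) :
    ∫⁻ ω, f ω ∂ν = ∑' n : ℕ, ν {ω | (n : ℝ≥0∞) < f ω} := by
  have hms : ∀ n : ℕ, MeasurableSet {ω | (n : ℝ≥0∞) < f ω} := fun n =>
    measurableSet_lt measurable_const hf
  have key : ∀ ω, f ω = ∑' n : ℕ, Set.indicator {ω | (n : ℝ≥0∞) < f ω} (fun _ => 1) ω := by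
    intro ω
    rcases hval ω with h | ⟨k, h⟩
    · have h2 : ∀ n : ℕ, Set.indicator {ω | (n : ℝ≥0∞) < f ω} (fun _ => (1:ℝ≥0∞)) ω = 1 := by
        intro n
        rw [Set.indicator_of_mem]
        simp only [Set.mem_setOf_eq, h]
        exact ENNReal.natCast_lt_top n
      rw [tsum_congr h2, h]
      exact (ENNReal.tsum_const_eq_top_of_ne_zero one_ne_zero).symm
    · have h2 : ∀ n : ℕ, Set.indicator {ω | (n : ℝ≥0∞) < f ω} (fun _ => (1:ℝ≥0∞)) ω
          = if n < k then 1 else 0 := by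
        intro n
        by_cases hn : n < k
        · rw [if_pos hn, Set.indicator_of_mem]
          simp only [Set.mem_setOf_eq, h]
          exact_mod_cast hn
        · rw [if_neg hn, Set.indicator_of_notMem]
          simp only [Set.mem_setOf_eq, h, not_lt]
          exact_mod_cast not_lt.mp hn
      rw [tsum_congr h2, h]
      rw [tsum_eq_sum (s := Finset.range k) (by intro n hn; rw [if_neg]; simpa using hn)]
      rw [Finset.sum_congr rfl (fun n hn => if_pos (Finset.mem_range.mp hn))]
      simp
  calc ∫⁻ ω, f ω ∂ν = ∫⁻ ω, ∑' n : ℕ, Set.indicator {ω | (n : ℝ≥0∞) < f ω} (fun _ => 1) ω ∂ν :=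
        lintegral_congr key
  _ = ∑' n : ℕ, ∫⁻ ω, Set.indicator {ω | (n : ℝ≥0∞) < f ω} (fun _ => 1) ω ∂ν :=
        lintegral_tsum (fun n => ((measurable_const).indicator (hms n)).aemeasurable)
  _ = ∑' n : ℕ, ν {ω | (n : ℝ≥0∞) < f ω} := by
        congr 1; funext n; exact lintegral_indicator_one (hms n)

end Meas



section Cyl

variable [MeasurableSpace Ω]

noncomputable def bp (p : ℝ) (b : Bool) : ℝ≥0∞ :=
  if b then ENNReal.ofReal p else 1 - ENNReal.ofReal p

def extv {n : ℕ} (v : Fin n → Bool) : ℕ → Bool :=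
  fun i => if h : i < n then v ⟨i, h⟩ else false

lemma measure_preimage_bool (μ : Measure Ω) [IsProbabilityMeasure μ] (Z : ℕ → Ω → Bool) (p : ℝ)
    (hmeas : ∀ i, Measurable (Z i)) (hbern : ∀ i, μ {ω | Z i ω = true} = ENNReal.ofReal p)
    (j : ℕ) (b : Bool) : μ {ω | Z j ω = b} = bp p b := by
  cases b
  · have h1 : {ω | Z j ω = false} = {ω | Z j ω = true}ᶜ := by
      ext ω; simp
    have h2 : MeasurableSet {ω | Z j ω = true} := hmeas j (MeasurableSet.of_discrete (s := ({true} : Set Bool)))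
    rw [h1, measure_compl h2 (measure_ne_top μ _), hbern j]
    simp [bp, measure_univ]
  · rw [hbern j]; simp [bp]

lemma cyl_measure (μ : Measure Ω) [IsProbabilityMeasure μ] (Z : ℕ → Ω → Bool) (p : ℝ)
    (hmeas : ∀ i, Measurable (Z i))
    (hindep : iIndepFun Z μ)
    (hbern : ∀ i, μ {ω | Z i ω = true} = ENNReal.ofReal p)
    (n a : ℕ) (f : ℕ → Bool) :
    μ (⋂ i ∈ Finset.range n, {ω | Z (a + i) ω = f i}) = ∏ i ∈ Finset.range n, bp p (f i) := by
  let emb : ℕ ↪ ℕ := ⟨fun i => a + i, fun x y h => by simpa using h⟩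
  have h1 : (⋂ i ∈ Finset.range n, {ω | Z (a + i) ω = f i})
      = ⋂ j ∈ (Finset.range n).map emb, Z j ⁻¹' {f (j - a)} := by
    ext ω
    simp only [Set.mem_iInter, Finset.mem_map, Finset.mem_range, Set.mem_preimage,
      Set.mem_singleton_iff, Set.mem_setOf_eq]
    constructor
    · rintro h j ⟨i, hi, rfl⟩
      have : emb i = a + i := rfl
      rw [this, Nat.add_sub_cancel_left]
      exact h i hi
    · intro h i hi
      have h2 := h (a + i) ⟨i, hi, rfl⟩
      rwa [Nat.add_sub_cancel_left] at h2
  rw [h1]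
  rw [hindep.measure_inter_preimage_eq_mul ((Finset.range n).map emb)
    (fun j _ => MeasurableSet.of_discrete)]
  rw [Finset.prod_map]
  apply Finset.prod_congr rfl
  intro i _
  have h3 : (Z (emb i)) ⁻¹' {f (emb i - a)} = {ω | Z (a + i) ω = f i} := by
    have : emb i = a + i := rfl
    rw [this, Nat.add_sub_cancel_left]
    ext ω; simp
  rw [h3]
  exact measure_preimage_bool μ Z p hmeas hbern _ _

/-- the event `n < tauWin` written as a predicate of the first `n` coordinates. -/
def Qn (W : ℕ∞) (s n : ℕ) (f : ℕ → Bool) : Prop :=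
  ∀ t ≤ n, ¬ s ≤ ((Finset.range t).filter
      (fun i : ℕ => (t : ℕ∞) ≤ (i : ℕ∞) + W ∧ f i = true)).card

lemma Qn_congr (W : ℕ∞) (s n : ℕ) (f g : ℕ → Bool) (h : ∀ i < n, f i = g i) :
    Qn W s n f ↔ Qn W s n g := by
  unfold Qn
  apply forall_congr'
  intro t
  apply imp_congr_right
  intro ht
  have hfil : (Finset.range t).filter (fun i : ℕ => (t : ℕ∞) ≤ (i : ℕ∞) + W ∧ f i = true)
      = (Finset.range t).filter (fun i : ℕ => (t : ℕ∞) ≤ (i : ℕ∞) + W ∧ g i = true) := by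
    apply Finset.filter_congr
    intro i hi
    rw [h i (lt_of_lt_of_le (Finset.mem_range.mp hi) ht)]
  rw [hfil]

lemma meas_lt_tauWin_shift (μ : Measure Ω) [IsProbabilityMeasure μ] (Z : ℕ → Ω → Bool) (p : ℝ)
    (hmeas : ∀ i, Measurable (Z i))
    (hindep : iIndepFun Z μ)
    (hbern : ∀ i, μ {ω | Z i ω = true} = ENNReal.ofReal p)
    (W : ℕ∞) (s n a : ℕ) :
    μ {ω | (n : ℝ≥0∞) < tauWin (fun i ω => Z (a + i) ω) W s ω}
      = ∑ v : Fin n → Bool,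
          (if Qn W s n (extv v) then ∏ i ∈ Finset.range n, bp p (extv v i) else 0) := by
  set D : (Fin n → Bool) → Set Ω := fun v =>
    if Qn W s n (extv v) then (⋂ i ∈ Finset.range n, {ω | Z (a + i) ω = extv v i}) else ∅ with hD
  have h1 : {ω | (n : ℝ≥0∞) < tauWin (fun i ω => Z (a + i) ω) W s ω} = ⋃ v, D v := by
    ext ω
    rw [Set.mem_setOf_eq, lt_tauWin_iff]
    show Qn W s n (fun i => Z (a + i) ω) ↔ _
    rw [Set.mem_iUnion]
    constructor
    · intro h
      refine ⟨fun i : Fin n => Z (a + i.val) ω, ?_⟩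
      have hagree : ∀ i < n, (fun i => Z (a + i) ω) i
          = extv (fun i : Fin n => Z (a + i.val) ω) i := by
        intro i hi; simp [extv, hi]
      have hQ : Qn W s n (extv fun i : Fin n => Z (a + i.val) ω) :=
        (Qn_congr W s n _ _ hagree).mp h
      simp only [hD]
      simp only [if_pos hQ]
      apply Set.mem_biInter
      intro i hi
      simp [extv, Finset.mem_range.mp hi]
    · rintro ⟨v, hv⟩
      by_cases hQ : Qn W s n (extv v)
      · simp only [hD, if_pos hQ] at hv
        have hagree : ∀ i < n, (fun i => Z (a + i) ω) i = extv v i := by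
          intro i hi
          exact Set.mem_iInter.mp (Set.mem_iInter.mp hv i) (Finset.mem_range.mpr hi)
        exact (Qn_congr W s n _ _ hagree).mpr hQ
      · simp only [hD] at hv; simp [if_neg hQ] at hv
  have hDmeas : ∀ v, MeasurableSet (D v) := by
    intro v
    simp only [hD]
    split
    · exact MeasurableSet.biInter (Set.to_countable _)
        (fun i _ => (hmeas (a + i)) (by trivial : MeasurableSet {extv v i}))
    · exact MeasurableSet.empty
  have hdisj : Pairwise (Function.onFun Disjoint D) := by
    intro v v' hne
    rw [Function.onFun, Set.disjoint_left]
    intro ω h h'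
    simp only [hD] at h h'
    by_cases hQ : Qn W s n (extv v)
    · by_cases hQ' : Qn W s n (extv v')
      · simp only [if_pos hQ] at h
        simp only [if_pos hQ'] at h'
        apply hne
        funext i
        have e1 := Set.mem_iInter.mp (Set.mem_iInter.mp h i) (Finset.mem_range.mpr i.isLt)
        have e2 := Set.mem_iInter.mp (Set.mem_iInter.mp h' i) (Finset.mem_range.mpr i.isLt)
        have : extv v i.val = extv v' i.val := by rw [← e1, ← e2]
        simpa [extv, i.isLt] using this
      · simp [if_neg hQ'] at h'
    · simp [if_neg hQ] at h
  rw [h1, measure_iUnion hdisj hDmeas, tsum_fintype]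
  apply Finset.sum_congr rfl
  intro v _
  simp only [hD]
  split
  · exact cyl_measure μ Z p hmeas hindep hbern n a (extv v)
  · exact measure_empty

end Cyl

end TauAux

open TauAux

theorem stmt_12 {Ω : Type*} [MeasurableSpace Ω] (μ : Measure Ω) [IsProbabilityMeasure μ]
    (p : ℝ) (hp : 0 < p) (hp1 : p < 1)
    (Z : ℕ → Ω → Bool)
    (hmeas : ∀ i, Measurable (Z i))
    (hindep : iIndepFun Z μ)
    (hbern : ∀ i, μ {ω | Z i ω = true} = ENNReal.ofReal p)
    (w s : ℕ) (hs : 1 ≤ s) (hsw : s ≤ w) :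
    ((∫⁻ ω, tauWin Z (w : ℕ∞) s ω ∂μ) - ∫⁻ ω, tauWin Z ⊤ s ω ∂μ)
        / (∫⁻ ω, tauWin Z (w : ℕ∞) s ω ∂μ)
      < μ {ω | (w : ℝ≥0∞) < tauWin Z (w : ℕ∞) s ω} := by
  classical
  set Z' : ℕ → Ω → Bool := fun i ω => Z (w + i) ω with hZ'
  set E := {ω | (w : ℝ≥0∞) < tauWin Z (w : ℕ∞) s ω} with hE
  set A := ∫⁻ ω, tauWin Z (w : ℕ∞) s ω ∂μ with hA
  set B := ∫⁻ ω, tauWin Z ⊤ s ω ∂μ with hB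
  set ε := μ E with hεdef
  have hZms : ∀ i, MeasurableSet {ω | Z i ω = true} := fun i =>
    hmeas i (MeasurableSet.of_discrete (s := ({true} : Set Bool)))
  have hZ'ms : ∀ i, MeasurableSet {ω | Z' i ω = true} := fun i => hZms (w + i)
  have hmτw : Measurable (tauWin Z (w : ℕ∞) s) := measurable_tauWin Z _ s hZms
  have hmtop : Measurable (tauWin Z ⊤ s) := measurable_tauWin Z _ s hZms
  have hmτ' : Measurable (tauWin Z' (w : ℕ∞) s) := measurable_tauWin Z' _ s hZ'ms
  have hEms : MeasurableSet E := measurableSet_lt measurable_const hmτw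
  have hvals : ∀ (Y : ℕ → Ω → Bool) (W : ℕ∞) (ω : Ω),
      tauWin Y W s ω = ⊤ ∨ ∃ k : ℕ, tauWin Y W s ω = (k : ℝ≥0∞) := by
    intro Y W ω
    rcases tauWin_cases Y W s ω with h | ⟨k, hk, -⟩
    exacts [Or.inl h, Or.inr ⟨k, hk⟩]
  -- ε is positive
  have hε_pos : 0 < ε := by
    have hsub : {ω | ∀ i < w, Z i ω = false} ⊆ E := by
      intro ω hω
      rw [hE, Set.mem_setOf_eq, lt_tauWin_iff]
      intro t ht hcard
      have hc0 : cnt Z (w : ℕ∞) t ω = 0 := by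
        rw [cnt, Finset.card_eq_zero, Finset.filter_eq_empty_iff]
        rintro i hi ⟨-, hz⟩
        have := hω i (lt_of_lt_of_le (Finset.mem_range.mp hi) ht)
        rw [this] at hz
        exact Bool.false_ne_true hz
      rw [hc0] at hcard
      omega
    have hcyl : μ {ω | ∀ i < w, Z i ω = false} = (1 - ENNReal.ofReal p) ^ w := by
      have hset : {ω | ∀ i < w, Z i ω = false}
          = ⋂ i ∈ Finset.range w, {ω | Z (0 + i) ω = false} := by
        ext ω
        simp [Set.mem_iInter]
      rw [hset, cyl_measure μ Z p hmeas hindep hbern w 0 (fun _ => false)]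
      simp [bp]
    have hpow : 0 < (1 - ENNReal.ofReal p) ^ w :=
      ENNReal.pow_pos (tsub_pos_iff_lt.mpr (ENNReal.ofReal_lt_one.mpr hp1)) w
    calc (0 : ℝ≥0∞) < (1 - ENNReal.ofReal p) ^ w := hpow
    _ = μ {ω | ∀ i < w, Z i ω = false} := hcyl.symm
    _ ≤ ε := measure_mono hsub
  -- independence of E and shifted events
  set M : ℕ → MeasurableSpace Ω := fun i =>
    MeasurableSpace.comap (Z i) (inferInstance : MeasurableSpace Bool) with hM
  have hIndep : Indep (⨆ i ∈ {i : ℕ | i < w}, M i) (⨆ i ∈ {i : ℕ | i < w}ᶜ, M i) μ :=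
    indep_biSup_compl (fun n => (hmeas n).comap_le)
      ((iIndepFun_iff_iIndep _ _ _).mp hindep) _
  have hmemM : ∀ i, MeasurableSet[M i] {ω | Z i ω = true} := fun i =>
    ⟨{true}, MeasurableSet.of_discrete, rfl⟩
  have hZ1 : ∀ i, i < w → MeasurableSet[⨆ i ∈ {i : ℕ | i < w}, M i] {ω | Z i ω = true} := by
    intro i hi
    exact (le_iSup₂ (f := fun i (_ : i ∈ {i : ℕ | i < w}) => M i) i hi) _ (hmemM i)
  have hZ2 : ∀ i, MeasurableSet[⨆ i ∈ {i : ℕ | i < w}ᶜ, M i] {ω | Z' i ω = true} := by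
    intro i
    exact (le_iSup₂ (f := fun i (_ : i ∈ {i : ℕ | i < w}ᶜ) => M i) (w + i)
      (by simp : (w + i) ∈ {i : ℕ | i < w}ᶜ)) _ (hmemM (w + i))
  have hEM1 : MeasurableSet[⨆ i ∈ {i : ℕ | i < w}, M i] E :=
    measurableSet_lt_tauWin Z (w : ℕ∞) s w hZ1
  have hBnM2 : ∀ n : ℕ, MeasurableSet[⨆ i ∈ {i : ℕ | i < w}ᶜ, M i]
      {ω | (n : ℝ≥0∞) < tauWin Z' (w : ℕ∞) s ω} := fun n =>
    measurableSet_lt_tauWin Z' (w : ℕ∞) s n (fun i _ => hZ2 i)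
  have key_indep : ∀ n : ℕ, μ (E ∩ {ω | (n : ℝ≥0∞) < tauWin Z' (w : ℕ∞) s ω})
      = ε * μ {ω | (n : ℝ≥0∞) < tauWin Z' (w : ℕ∞) s ω} := fun n =>
    (Indep_iff _ _ μ).mp hIndep E _ hEM1 (hBnM2 n)
  -- the shifted process has the same expected waiting time
  have hshift_meas : ∀ n : ℕ, μ {ω | (n : ℝ≥0∞) < tauWin Z' (w : ℕ∞) s ω}
      = μ {ω | (n : ℝ≥0∞) < tauWin Z (w : ℕ∞) s ω} := by
    intro n
    have h0 : (fun i ω' => Z (0 + i) ω') = Z := by funext i ω'; simp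
    calc μ {ω | (n : ℝ≥0∞) < tauWin Z' (w : ℕ∞) s ω}
        = ∑ v : Fin n → Bool, (if Qn (w : ℕ∞) s n (extv v)
            then ∏ i ∈ Finset.range n, bp p (extv v i) else 0) :=
          meas_lt_tauWin_shift μ Z p hmeas hindep hbern (w : ℕ∞) s n w
    _ = μ {ω | (n : ℝ≥0∞) < tauWin (fun i ω' => Z (0 + i) ω') (w : ℕ∞) s ω} :=
          (meas_lt_tauWin_shift μ Z p hmeas hindep hbern (w : ℕ∞) s n 0).symm
    _ = μ {ω | (n : ℝ≥0∞) < tauWin Z (w : ℕ∞) s ω} := by rw [h0]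
  have hA' : ∫⁻ ω, tauWin Z' (w : ℕ∞) s ω ∂μ = A := by
    rw [lintegral_eq_tsum μ _ hmτ' (hvals Z' _), hA,
      lintegral_eq_tsum μ _ hmτw (hvals Z _)]
    exact tsum_congr hshift_meas
  have hg : ∫⁻ ω, E.indicator (tauWin Z' (w : ℕ∞) s) ω ∂μ = ε * A := by
    rw [lintegral_indicator hEms]
    rw [lintegral_eq_tsum (μ.restrict E) _ hmτ' (hvals Z' _)]
    have hre : ∀ n : ℕ, (μ.restrict E) {ω | (n : ℝ≥0∞) < tauWin Z' (w : ℕ∞) s ω}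
        = ε * μ {ω | (n : ℝ≥0∞) < tauWin Z' (w : ℕ∞) s ω} := by
      intro n
      rw [Measure.restrict_apply (measurableSet_lt measurable_const hmτ'), Set.inter_comm]
      exact key_indep n
    rw [tsum_congr hre, ENNReal.tsum_mul_left,
      ← lintegral_eq_tsum μ _ hmτ' (hvals Z' _), hA']
  -- the pointwise inequality
  have star : ∀ ω, tauWin Z (w : ℕ∞) s ω + E.indicator (1 : Ω → ℝ≥0∞) ω
      ≤ tauWin Z ⊤ s ω + E.indicator (tauWin Z' (w : ℕ∞) s) ω := by
    intro ω
    by_cases hω : ω ∈ E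
    · rw [Set.indicator_of_mem hω, Set.indicator_of_mem hω, Pi.one_apply]
      have h1 : (w : ℝ≥0∞) < tauWin Z ⊤ s ω := (lt_tauWin_top_iff Z w s ω).mp hω
      have h2 : (w : ℝ≥0∞) + 1 ≤ tauWin Z ⊤ s ω := by
        rcases tauWin_cases Z ⊤ s ω with h | ⟨k, hk, -⟩
        · rw [h]; exact le_top
        · rw [hk] at h1 ⊢
          have hwk : w < k := by exact_mod_cast h1
          have : ((w + 1 : ℕ) : ℝ≥0∞) ≤ (k : ℝ≥0∞) := by exact_mod_cast hwk
          push_cast at this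
          exact this
      calc tauWin Z (w : ℕ∞) s ω + 1
          ≤ ((w : ℝ≥0∞) + tauWin Z' (w : ℕ∞) s ω) + 1 :=
            add_le_add_left (tauWin_le_shift Z w s ω) 1
      _ = ((w : ℝ≥0∞) + 1) + tauWin Z' (w : ℕ∞) s ω := by ring
      _ ≤ tauWin Z ⊤ s ω + tauWin Z' (w : ℕ∞) s ω := add_le_add_left h2 _
    · rw [Set.indicator_of_notMem hω, Set.indicator_of_notMem hω, add_zero, add_zero]
      have h1 : tauWin Z (w : ℕ∞) s ω ≤ (w : ℝ≥0∞) := by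
        rw [hE, Set.mem_setOf_eq, not_lt] at hω
        exact hω
      exact (tauWin_top_eq Z w s ω h1).ge
  -- integrate
  have h1 : A + ε ≤ B + ε * A := by
    calc A + ε = ∫⁻ ω, (tauWin Z (w : ℕ∞) s ω + E.indicator (1 : Ω → ℝ≥0∞) ω) ∂μ := by
          rw [lintegral_add_left hmτw, lintegral_indicator_one hEms]
    _ ≤ ∫⁻ ω, (tauWin Z ⊤ s ω + E.indicator (tauWin Z' (w : ℕ∞) s) ω) ∂μ :=
          lintegral_mono star
    _ = B + ε * A := by rw [lintegral_add_left hmtop, hg]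
  -- conclude
  by_cases hAtop : A = ⊤
  · rw [hAtop, ENNReal.div_top]
    exact hε_pos
  · have hA1 : (1 : ℝ≥0∞) ≤ A := by
      calc (1 : ℝ≥0∞) = ∫⁻ _, (1 : ℝ≥0∞) ∂μ := by simp
      _ ≤ A := lintegral_mono (fun ω =>
          le_trans (by exact_mod_cast hs : (1 : ℝ≥0∞) ≤ (s : ℝ≥0∞))
            (natCast_le_tauWin Z (w : ℕ∞) s ω))
    have hAne : A ≠ 0 := by
      intro h
      rw [h] at hA1
      simp at hA1
    have hεne : ε ≠ 0 := hε_pos.ne'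
    have hεtop : ε ≠ ⊤ := measure_ne_top μ E
    have hεA_top : ε * A ≠ ⊤ := ENNReal.mul_ne_top hεtop hAtop
    have hε_le : ε ≤ ε * A := by
      nth_rewrite 1 [← mul_one ε]
      exact mul_le_mul_right hA1 ε
    have h2 : A ≤ B + (ε * A - ε) := by
      have h1' := h1
      rw [show B + ε * A = (B + (ε * A - ε)) + ε by
        rw [add_assoc, tsub_add_cancel_of_le hε_le]] at h1'
      exact (ENNReal.add_le_add_iff_right hεtop).mp h1'
    have h3 : A - B ≤ ε * A - ε := tsub_le_iff_right.mpr (by rwa [add_comm])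
    have h4 : (A - B) / A ≤ (ε * A - ε) / A := ENNReal.div_le_div_right h3 A
    have h5 : (ε * A - ε) / A < ε := by
      rw [ENNReal.div_lt_iff (Or.inl hAne) (Or.inl hAtop)]
      exact ENNReal.sub_lt_self hεA_top (mul_ne_zero hεne hAne) hεne
    exact lt_of_le_of_lt h4 h5
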